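/- Let f : K × K → [−1,1] with K a compact subset of ℝ^k, and suppose f is L-Lipschitz in the sense |f(x,y) − f(x',y')| ≤ L‖x−x'‖ + L‖y−y'‖. Let β_1,…,β_n ∈ K and let M be the n×n matrix with m_{ij} = f(β_i, β_j). If K can be partitioned into N classes each of diameter at most δ/(2L), then ‖M‖_* ≤ n^{3/2}·δ + sqrt(N)·n. -/

import Mathlib

theorem Matrix.isHermitian_transpose_mul_self {m n : ℕ} (A : Matrix (Fin m) (Fin n) ℝ) :
    (Matrix.transpose A * A).IsHermitian := by
  have h := Matrix.isHermitian_conjTranspose_mul_self A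
  rwa [Matrix.conjTranspose_eq_transpose_of_trivial] at h

noncomputable def singularValues {m n : ℕ} (A : Matrix (Fin m) (Fin n) ℝ) : Fin n → ℝ :=
  fun i => Real.sqrt ((Matrix.isHermitian_transpose_mul_self A).eigenvalues i)

noncomputable def nuclearNorm {m n : ℕ} (A : Matrix (Fin m) (Fin n) ℝ) : ℝ :=
  ∑ i, singularValues A i

noncomputable def frobeniusNorm {m n : ℕ} (A : Matrix (Fin m) (Fin n) ℝ) : ℝ :=
  Real.sqrt (∑ i, ∑ j, (A i j)^2)

noncomputable def matrixSpectralNorm {m n : ℕ} (A : Matrix (Fin m) (Fin n) ℝ) : ℝ :=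
  ⨆ i, singularValues A i
open Matrix Finset

lemma sum_dotProduct' {m n : ℕ} (f : Fin m → (Fin n → ℝ)) (x : Fin n → ℝ) :
    (∑ i, f i) ⬝ᵥ x = ∑ i, f i ⬝ᵥ x := by
  simp only [dotProduct, Finset.sum_apply, Finset.sum_mul]
  exact Finset.sum_comm

lemma dotProduct_sum' {m n : ℕ} (f : Fin m → (Fin n → ℝ)) (x : Fin n → ℝ) :
    x ⬝ᵥ (∑ i, f i) = ∑ i, x ⬝ᵥ f i := by
  simp only [dotProduct, Finset.sum_apply, Finset.mul_sum]
  exact Finset.sum_comm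

/-- Bessel-type inequality for a pairwise-orthogonal family with norms ≤ 1. -/
lemma bessel_dot {m n : ℕ} (u : Fin m → (Fin n → ℝ))
    (horth : ∀ i j, i ≠ j → u i ⬝ᵥ u j = 0)
    (hle : ∀ i, u i ⬝ᵥ u i ≤ 1) (x : Fin n → ℝ) :
    ∑ i, (u i ⬝ᵥ x)^2 ≤ x ⬝ᵥ x := by
  set c : Fin m → ℝ := fun i => u i ⬝ᵥ x with hc
  set y : Fin n → ℝ := x - ∑ i, c i • u i with hy
  have hynn : (0:ℝ) ≤ y ⬝ᵥ y := by
    simp only [dotProduct]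
    exact Finset.sum_nonneg fun i _ => mul_self_nonneg _
  have hsx : (∑ i, c i • u i) ⬝ᵥ x = ∑ i, c i ^ 2 := by
    rw [sum_dotProduct']
    refine Finset.sum_congr rfl fun i _ => ?_
    rw [smul_dotProduct]
    simp [hc, sq, smul_eq_mul]
  have hss : (∑ i, c i • u i) ⬝ᵥ (∑ j, c j • u j) = ∑ i, c i ^ 2 * (u i ⬝ᵥ u i) := by
    rw [sum_dotProduct']
    refine Finset.sum_congr rfl fun i _ => ?_
    rw [smul_dotProduct, dotProduct_sum']
    rw [Finset.sum_eq_single i]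
    · rw [dotProduct_smul]; simp [sq, smul_eq_mul]; ring
    · intro j _ hj
      rw [dotProduct_smul, horth i j (Ne.symm hj)]
      simp
    · simp
  have hxs : x ⬝ᵥ (∑ i, c i • u i) = ∑ i, c i ^ 2 := by
    rw [dotProduct_comm]; exact hsx
  have hexp : y ⬝ᵥ y = x ⬝ᵥ x - 2 * ∑ i, c i ^ 2 + ∑ i, c i ^ 2 * (u i ⬝ᵥ u i) := by
    rw [hy, sub_dotProduct, dotProduct_sub, dotProduct_sub, hsx, hxs, hss]
    ring
  have hT : ∑ i, c i ^ 2 * (u i ⬝ᵥ u i) ≤ ∑ i, c i ^ 2 :=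
    Finset.sum_le_sum fun i _ => by
      nlinarith [sq_nonneg (c i), hle i]
  have := hexp ▸ hynn
  linarith

section SVD
variable {n : ℕ} (A : Matrix (Fin n) (Fin n) ℝ)

-- basic data
lemma svd_basis_orth :
    ∀ i j : Fin n, i ≠ j →
      (⇑((Matrix.isHermitian_transpose_mul_self A).eigenvectorBasis i) : Fin n → ℝ) ⬝ᵥ
        ⇑((Matrix.isHermitian_transpose_mul_self A).eigenvectorBasis j) = 0 := by
  intro i j hij
  have h := orthonormal_iff_ite.mp (Matrix.isHermitian_transpose_mul_self A).eigenvectorBasis.orthonormal i j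
  rw [if_neg hij] at h
  rw [dotProduct_comm]
  simpa [PiLp.inner_apply, dotProduct] using h

lemma svd_basis_norm :
    ∀ i : Fin n,
      (⇑((Matrix.isHermitian_transpose_mul_self A).eigenvectorBasis i) : Fin n → ℝ) ⬝ᵥ
        ⇑((Matrix.isHermitian_transpose_mul_self A).eigenvectorBasis i) = 1 := by
  intro i
  have h := orthonormal_iff_ite.mp (Matrix.isHermitian_transpose_mul_self A).eigenvectorBasis.orthonormal i i
  rw [if_pos rfl] at h
  simpa only [PiLp.inner_apply, dotProduct, Real.inner_apply] using h

lemma svd_w_dot :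
    ∀ i j : Fin n,
      (A *ᵥ ⇑((Matrix.isHermitian_transpose_mul_self A).eigenvectorBasis i)) ⬝ᵥ
        (A *ᵥ ⇑((Matrix.isHermitian_transpose_mul_self A).eigenvectorBasis j)) =
      (Matrix.isHermitian_transpose_mul_self A).eigenvalues j *
        ((⇑((Matrix.isHermitian_transpose_mul_self A).eigenvectorBasis i) : Fin n → ℝ) ⬝ᵥ
          ⇑((Matrix.isHermitian_transpose_mul_self A).eigenvectorBasis j)) := by
  intro i j
  set hA := Matrix.isHermitian_transpose_mul_self A
  set b : Fin n → (Fin n → ℝ) := fun i => ⇑(hA.eigenvectorBasis i)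
  have key : (Aᴴ * A) *ᵥ b j = hA.eigenvalues j • b j := hA.mulVec_eigenvectorBasis j
  calc (A *ᵥ b i) ⬝ᵥ (A *ᵥ b j)
      = b i ⬝ᵥ ((Aᴴ * A) *ᵥ b j) := by
        rw [← Matrix.mulVec_mulVec, Matrix.dotProduct_mulVec (b i) Aᴴ,
          Matrix.conjTranspose_eq_transpose_of_trivial, Matrix.vecMul_transpose]
    _ = hA.eigenvalues j * (b i ⬝ᵥ b j) := by
        rw [key, dotProduct_smul]; simp [smul_eq_mul]
end SVD

section SVD2
variable {n : ℕ} (A : Matrix (Fin n) (Fin n) ℝ)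

lemma svd_complete :
    ∀ s t : Fin n,
      ∑ j, (⇑((Matrix.isHermitian_transpose_mul_self A).eigenvectorBasis j) : Fin n → ℝ) s *
        ⇑((Matrix.isHermitian_transpose_mul_self A).eigenvectorBasis j) t
      = if s = t then 1 else 0 := by
  intro s t
  set hA := Matrix.isHermitian_transpose_mul_self A
  have h1 : (hA.eigenvectorUnitary : Matrix (Fin n) (Fin n) ℝ) *
      star (hA.eigenvectorUnitary : Matrix (Fin n) (Fin n) ℝ) = 1 :=
    Matrix.mem_unitaryGroup_iff.mp hA.eigenvectorUnitary.2
  have h2 : ((hA.eigenvectorUnitary : Matrix (Fin n) (Fin n) ℝ) *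
      star (hA.eigenvectorUnitary : Matrix (Fin n) (Fin n) ℝ)) s t = (1 : Matrix (Fin n) (Fin n) ℝ) s t := by
    rw [h1]
  simp only [Matrix.mul_apply, Matrix.one_apply, Matrix.star_apply,
    Matrix.IsHermitian.eigenvectorUnitary_apply, star_trivial] at h2 ⊢
  exact h2

lemma expand_of_complete {n : ℕ} (b : Fin n → (Fin n → ℝ))
    (hcomp : ∀ s t : Fin n, ∑ j, b j s * b j t = if s = t then 1 else 0)
    (x : Fin n → ℝ) : x = ∑ j, (b j ⬝ᵥ x) • b j := by
  funext s
  simp only [Finset.sum_apply, Pi.smul_apply, smul_eq_mul, dotProduct]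
  calc x s = ∑ t, x t * ∑ j, b j t * b j s := by
        simp only [hcomp]
        simp
    _ = ∑ j, (∑ t, b j t * x t) * b j s := by
        simp only [Finset.mul_sum, Finset.sum_mul]
        rw [Finset.sum_comm]
        exact Finset.sum_congr rfl fun j _ => Finset.sum_congr rfl fun t _ => by ring

end SVD2

lemma cs_sum {m : ℕ} (f g : Fin m → ℝ) :
    ∑ i, f i * g i ≤ Real.sqrt (∑ i, f i ^ 2) * Real.sqrt (∑ i, g i ^ 2) := by
  have h2 := Finset.sum_mul_sq_le_sq_mul_sq Finset.univ f g
  calc ∑ i, f i * g i ≤ |∑ i, f i * g i| := le_abs_self _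
    _ = Real.sqrt ((∑ i, f i * g i)^2) := (Real.sqrt_sq_eq_abs _).symm
    _ ≤ Real.sqrt ((∑ i, f i^2) * (∑ i, g i^2)) := Real.sqrt_le_sqrt h2
    _ = _ := Real.sqrt_mul (by positivity) _

lemma sum_dotProduct_le_nuclearNorm {n m : ℕ} (A : Matrix (Fin n) (Fin n) ℝ)
    (u v : Fin m → (Fin n → ℝ))
    (hu : ∀ x : Fin n → ℝ, ∑ i, (u i ⬝ᵥ x)^2 ≤ x ⬝ᵥ x)
    (hv : ∀ x : Fin n → ℝ, ∑ i, (v i ⬝ᵥ x)^2 ≤ x ⬝ᵥ x) :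
    ∑ i, u i ⬝ᵥ (A *ᵥ v i) ≤ nuclearNorm A := by
  classical
  set hA := Matrix.isHermitian_transpose_mul_self A with hhA
  set b : Fin n → (Fin n → ℝ) := fun j => ⇑(hA.eigenvectorBasis j) with hb
  set lam : Fin n → ℝ := hA.eigenvalues with hlam
  set w : Fin n → (Fin n → ℝ) := fun j => A *ᵥ b j with hw
  have hterm : ∀ i, u i ⬝ᵥ (A *ᵥ v i) = ∑ j, (b j ⬝ᵥ v i) * (u i ⬝ᵥ w j) := by
    intro i
    have hvi : v i = ∑ j, (b j ⬝ᵥ v i) • b j := expand_of_complete b (svd_complete A) (v i)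
    conv_lhs => rw [hvi]
    have : A *ᵥ (∑ j, (b j ⬝ᵥ v i) • b j) = ∑ j, (b j ⬝ᵥ v i) • w j := by
      rw [← Matrix.mulVecLin_apply, map_sum]
      refine Finset.sum_congr rfl fun j _ => ?_
      rw [LinearMap.map_smul, Matrix.mulVecLin_apply]
    rw [this, dotProduct_sum']
    exact Finset.sum_congr rfl fun j _ => by
      rw [dotProduct_smul]; simp [smul_eq_mul]
  calc ∑ i, u i ⬝ᵥ (A *ᵥ v i) = ∑ i, ∑ j, (b j ⬝ᵥ v i) * (u i ⬝ᵥ w j) :=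
        Finset.sum_congr rfl fun i _ => hterm i
    _ = ∑ j, ∑ i, (b j ⬝ᵥ v i) * (u i ⬝ᵥ w j) := Finset.sum_comm
    _ ≤ ∑ j, singularValues A j := by
        refine Finset.sum_le_sum fun j _ => ?_
        have h1 : ∑ i, (b j ⬝ᵥ v i)^2 ≤ 1 := by
          have h := hv (b j)
          rw [svd_basis_norm A j] at h
          calc ∑ i, (b j ⬝ᵥ v i)^2 = ∑ i, (v i ⬝ᵥ b j)^2 :=
                Finset.sum_congr rfl fun i _ => by rw [dotProduct_comm]
            _ ≤ 1 := h
        have h2 : ∑ i, (u i ⬝ᵥ w j)^2 ≤ lam j := by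
          have h := hu (w j)
          have hwj : w j ⬝ᵥ w j = lam j := by
            rw [hw]
            simp only []
            rw [svd_w_dot A j j, svd_basis_norm A j, mul_one]
          rwa [hwj] at h
        have hlamnn : 0 ≤ lam j := Matrix.eigenvalues_conjTranspose_mul_self_nonneg A j
        calc ∑ i, (b j ⬝ᵥ v i) * (u i ⬝ᵥ w j)
            ≤ Real.sqrt (∑ i, (b j ⬝ᵥ v i)^2) * Real.sqrt (∑ i, (u i ⬝ᵥ w j)^2) := cs_sum _ _
          _ ≤ Real.sqrt 1 * Real.sqrt (lam j) :=
              mul_le_mul (Real.sqrt_le_sqrt h1) (Real.sqrt_le_sqrt h2)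
                (Real.sqrt_nonneg _) (Real.sqrt_nonneg _)
          _ = singularValues A j := by rw [Real.sqrt_one, one_mul]; rfl
    _ = nuclearNorm A := rfl

lemma nuclearNorm_add_le {n : ℕ} (A B : Matrix (Fin n) (Fin n) ℝ) :
    nuclearNorm (A + B) ≤ nuclearNorm A + nuclearNorm B := by
  classical
  set C : Matrix (Fin n) (Fin n) ℝ := A + B with hC
  set hCh := Matrix.isHermitian_transpose_mul_self C with hhC
  set b : Fin n → (Fin n → ℝ) := fun j => ⇑(hCh.eigenvectorBasis j) with hb
  set lam : Fin n → ℝ := hCh.eigenvalues with hlam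
  set w : Fin n → (Fin n → ℝ) := fun j => C *ᵥ b j with hw
  have hlamnn : ∀ i, 0 ≤ lam i := fun i =>
    Matrix.eigenvalues_conjTranspose_mul_self_nonneg C i
  have hwdot : ∀ i j, w i ⬝ᵥ w j = lam j * (b i ⬝ᵥ b j) := fun i j => svd_w_dot C i j
  set u : Fin n → (Fin n → ℝ) :=
    fun i => if lam i = 0 then 0 else (Real.sqrt (lam i))⁻¹ • w i with hu
  have huorth : ∀ i j, i ≠ j → u i ⬝ᵥ u j = 0 := by
    intro i j hij
    rw [hu]
    by_cases h1 : lam i = 0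
    · simp [h1]
    by_cases h2 : lam j = 0
    · simp [h1, h2]
    simp only [if_neg h1, if_neg h2]
    rw [smul_dotProduct, dotProduct_smul, hwdot i j, svd_basis_orth C i j hij]
    simp
  have hunorm : ∀ i, u i ⬝ᵥ u i ≤ 1 := by
    intro i
    rw [hu]
    by_cases h1 : lam i = 0
    · simp [h1]
    simp only [if_neg h1]
    rw [smul_dotProduct, dotProduct_smul, hwdot i i, svd_basis_norm C i]
    have hpos : 0 < lam i := lt_of_le_of_ne (hlamnn i) (Ne.symm h1)
    have hs : Real.sqrt (lam i) * Real.sqrt (lam i) = lam i := Real.mul_self_sqrt (hlamnn i)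
    have hsne : Real.sqrt (lam i) ≠ 0 := ne_of_gt (Real.sqrt_pos.mpr hpos)
    rw [smul_eq_mul, smul_eq_mul, mul_one]
    field_simp
    exact (Real.sq_sqrt (hlamnn i)).ge
  have hborth : ∀ i j, i ≠ j → b i ⬝ᵥ b j = 0 := fun i j h => svd_basis_orth C i j h
  have hbnorm : ∀ i, b i ⬝ᵥ b i ≤ 1 := fun i => le_of_eq (svd_basis_norm C i)
  have hmain : nuclearNorm C = ∑ i, u i ⬝ᵥ (C *ᵥ b i) := by
    refine Finset.sum_congr rfl fun i _ => ?_
    show singularValues C i = u i ⬝ᵥ w i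
    rw [hu]
    by_cases h1 : lam i = 0
    · simp only [if_pos h1, zero_dotProduct]
      show Real.sqrt (hCh.eigenvalues i) = 0
      rw [← hlam, h1, Real.sqrt_zero]
    · simp only [if_neg h1]
      rw [smul_dotProduct, hwdot i i, svd_basis_norm C i, mul_one]
      have hpos : 0 < lam i := lt_of_le_of_ne (hlamnn i) (Ne.symm h1)
      have hs : Real.sqrt (lam i) * Real.sqrt (lam i) = lam i := Real.mul_self_sqrt (hlamnn i)
      have hsne : Real.sqrt (lam i) ≠ 0 := ne_of_gt (Real.sqrt_pos.mpr hpos)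
      show Real.sqrt (hCh.eigenvalues i) = (Real.sqrt (lam i))⁻¹ • lam i
      rw [← hlam, smul_eq_mul]
      field_simp
      exact Real.sq_sqrt (hlamnn i)
  have hsplit : ∑ i, u i ⬝ᵥ (C *ᵥ b i)
      = ∑ i, u i ⬝ᵥ (A *ᵥ b i) + ∑ i, u i ⬝ᵥ (B *ᵥ b i) := by
    rw [← Finset.sum_add_distrib]
    refine Finset.sum_congr rfl fun i _ => ?_
    rw [hC, Matrix.add_mulVec, dotProduct_add]
  rw [hmain, hsplit]
  exact add_le_add
    (sum_dotProduct_le_nuclearNorm A u b (bessel_dot u huorth hunorm) (bessel_dot b hborth hbnorm))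
    (sum_dotProduct_le_nuclearNorm B u b (bessel_dot u huorth hunorm) (bessel_dot b hborth hbnorm))

lemma trace_eq_sum_eigs {n : ℕ} (M : Matrix (Fin n) (Fin n) ℝ) (hM : M.IsHermitian) :
    M.trace = ∑ i, hM.eigenvalues i := by
  simpa using hM.trace_eq_sum_eigenvalues

lemma sum_sq_singularValues {n : ℕ} (A : Matrix (Fin n) (Fin n) ℝ) :
    ∑ i, (singularValues A i)^2 = ∑ i, ∑ j, (A i j)^2 := by
  have h1 : ∀ i, (singularValues A i)^2 = (Matrix.isHermitian_transpose_mul_self A).eigenvalues i :=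
    fun i => Real.sq_sqrt (Matrix.eigenvalues_conjTranspose_mul_self_nonneg A i)
  rw [Finset.sum_congr rfl fun i _ => h1 i,
    ← trace_eq_sum_eigs _ (Matrix.isHermitian_transpose_mul_self A)]
  rw [Matrix.trace]
  simp only [Matrix.diag_apply, Matrix.mul_apply, Matrix.conjTranspose_apply, star_trivial]
  rw [Finset.sum_comm]
  exact Finset.sum_congr rfl fun i _ => Finset.sum_congr rfl fun j _ => (sq (A i j)).symm

lemma nuclearNorm_le_sqrt_rank {n r : ℕ} (A : Matrix (Fin n) (Fin n) ℝ) (hr : A.rank ≤ r) :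
    nuclearNorm A ≤ Real.sqrt r * Real.sqrt (∑ i, ∑ j, (A i j)^2) := by
  classical
  set hA := Matrix.isHermitian_transpose_mul_self A with hhA
  set s : Finset (Fin n) := Finset.univ.filter (fun i => hA.eigenvalues i ≠ 0) with hs
  have hcard : s.card = A.rank := by
    rw [← Matrix.rank_conjTranspose_mul_self A, Matrix.conjTranspose_eq_transpose_of_trivial, hA.rank_eq_card_non_zero_eigs,
      Fintype.card_subtype]
  have hnuc : nuclearNorm A = ∑ i ∈ s, singularValues A i := by
    rw [nuclearNorm]
    refine (Finset.sum_subset (Finset.subset_univ s) fun i _ hi => ?_).symm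
    simp only [hs, Finset.mem_filter, Finset.mem_univ, true_and, not_not] at hi
    show Real.sqrt (hA.eigenvalues i) = 0
    rw [hi, Real.sqrt_zero]
  have hcs := Finset.sum_mul_sq_le_sq_mul_sq s (fun i => singularValues A i) (fun _ => (1:ℝ))
  simp only [mul_one, one_pow, Finset.sum_const, nsmul_eq_mul] at hcs
  have h2 : ∑ i ∈ s, (singularValues A i)^2 ≤ ∑ i, ∑ j, (A i j)^2 := by
    rw [← sum_sq_singularValues A]
    exact Finset.sum_le_sum_of_subset_of_nonneg (Finset.subset_univ s)
      fun i _ _ => sq_nonneg _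
  have hnn : (0:ℝ) ≤ ∑ i ∈ s, singularValues A i :=
    Finset.sum_nonneg fun i _ => Real.sqrt_nonneg _
  rw [hnuc]
  have : (∑ i ∈ s, singularValues A i)^2 ≤ (r : ℝ) * ∑ i, ∑ j, (A i j)^2 := by
    calc (∑ i ∈ s, singularValues A i)^2
        ≤ (∑ i ∈ s, (singularValues A i)^2) * s.card := hcs
      _ ≤ (∑ i, ∑ j, (A i j)^2) * r := by
          apply mul_le_mul h2 ?_ (by positivity) ?_
          · exact_mod_cast hcard.le.trans hr
          · exact Finset.sum_nonneg fun i _ => Finset.sum_nonneg fun j _ => sq_nonneg _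
      _ = (r:ℝ) * ∑ i, ∑ j, (A i j)^2 := mul_comm _ _
  calc ∑ i ∈ s, singularValues A i
      = Real.sqrt ((∑ i ∈ s, singularValues A i)^2) := (Real.sqrt_sq hnn).symm
    _ ≤ Real.sqrt ((r:ℝ) * ∑ i, ∑ j, (A i j)^2) := Real.sqrt_le_sqrt this
    _ = _ := Real.sqrt_mul (Nat.cast_nonneg r) _

lemma frob_sq_le {n : ℕ} (A : Matrix (Fin n) (Fin n) ℝ) (c : ℝ) (hc : 0 ≤ c)
    (h : ∀ i j, |A i j| ≤ c) :
    Real.sqrt (∑ i, ∑ j, (A i j)^2) ≤ n * c := by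
  have h1 : ∑ i, ∑ j, (A i j)^2 ≤ (n * c)^2 := by
    calc ∑ i, ∑ j, (A i j)^2 ≤ ∑ _i : Fin n, ∑ _j : Fin n, c^2 := by
          refine Finset.sum_le_sum fun i _ => Finset.sum_le_sum fun j _ => ?_
          rw [← sq_abs]
          exact pow_le_pow_left₀ (abs_nonneg _) (h i j) 2
      _ = (n:ℝ) * ((n:ℝ) * c^2) := by simp [Finset.sum_const, mul_comm]
      _ = (n * c)^2 := by ring
  calc Real.sqrt (∑ i, ∑ j, (A i j)^2) ≤ Real.sqrt ((n*c)^2) := Real.sqrt_le_sqrt h1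
    _ = n * c := Real.sqrt_sq (by positivity)

lemma rpow_three_halves (n : ℕ) : ((n:ℝ)) ^ ((3:ℝ)/2) = Real.sqrt n * n := by
  rcases Nat.eq_zero_or_pos n with h | h
  · subst h; simp [Real.zero_rpow (by norm_num : ((3:ℝ)/2) ≠ 0)]
  · have hn : (0:ℝ) < n := by exact_mod_cast h
    rw [show ((3:ℝ)/2) = 1/2 + 1 by norm_num, Real.rpow_add hn, Real.rpow_one,
      Real.sqrt_eq_rpow]

theorem latentSpace_nuclearNorm_le {k n N : ℕ}
    (K : Set (EuclideanSpace ℝ (Fin k))) (hK : IsCompact K)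
    (f : EuclideanSpace ℝ (Fin k) → EuclideanSpace ℝ (Fin k) → ℝ)
    (hf1 : ∀ x ∈ K, ∀ y ∈ K, |f x y| ≤ 1)
    (L : ℝ) (hL : 0 < L)
    (hLip : ∀ x ∈ K, ∀ y ∈ K, ∀ x' ∈ K, ∀ y' ∈ K,
      |f x y - f x' y'| ≤ L * ‖x - x'‖ + L * ‖y - y'‖)
    (δ : ℝ) (hδ : 0 < δ)
    (g : EuclideanSpace ℝ (Fin k) → Fin N)
    (hg : ∀ x ∈ K, ∀ y ∈ K, g x = g y → ‖x - y‖ ≤ δ / (2 * L))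
    (β : Fin n → EuclideanSpace ℝ (Fin k)) (hβ : ∀ i, β i ∈ K)
    (M : Matrix (Fin n) (Fin n) ℝ) (hM : ∀ i j, M i j = f (β i) (β j)) :
    nuclearNorm M ≤ (n : ℝ) ^ ((3:ℝ)/2) * δ + Real.sqrt (N : ℝ) * n := by
  classical
  set rep : Fin N → EuclideanSpace ℝ (Fin k) :=
    fun t => if h : ∃ i, g (β i) = t then β h.choose else 0 with hrep
  have hrepK : ∀ i : Fin n, rep (g (β i)) ∈ K := by
    intro i
    have h : ∃ i', g (β i') = g (β i) := ⟨i, rfl⟩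
    rw [hrep]; simp only [dif_pos h]; exact hβ _
  have hrepg : ∀ i : Fin n, g (rep (g (β i))) = g (β i) := by
    intro i
    have h : ∃ i', g (β i') = g (β i) := ⟨i, rfl⟩
    rw [hrep]; simp only [dif_pos h]; exact h.choose_spec
  have hclose : ∀ i : Fin n, ‖β i - rep (g (β i))‖ ≤ δ / (2 * L) := by
    intro i
    exact hg (β i) (hβ i) _ (hrepK i) (hrepg i).symm
  set B : Matrix (Fin n) (Fin n) ℝ :=
    Matrix.of (fun i j => f (rep (g (β i))) (rep (g (β j)))) with hB
  have hB1 : ∀ i j, |B i j| ≤ 1 := fun i j => hf1 _ (hrepK i) _ (hrepK j)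
  have hMB : ∀ i j, |(M - B) i j| ≤ δ := by
    intro i j
    have h := hLip (β i) (hβ i) (β j) (hβ j) _ (hrepK i) _ (hrepK j)
    have h1 := hclose i
    have h2 := hclose j
    have hLd : L * (δ / (2 * L)) = δ / 2 := by field_simp
    calc |(M - B) i j| = |f (β i) (β j) - f (rep (g (β i))) (rep (g (β j)))| := by
          rw [Matrix.sub_apply, hM i j]; rfl
      _ ≤ L * ‖β i - rep (g (β i))‖ + L * ‖β j - rep (g (β j))‖ := h
      _ ≤ L * (δ / (2 * L)) + L * (δ / (2 * L)) := by
          have := hL.le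
          gcongr
      _ = δ := by rw [hLd]; ring
  -- rank bound for B
  have hrank : B.rank ≤ N := by
    set P : Matrix (Fin n) (Fin N) ℝ :=
      Matrix.of (fun i t => if g (β i) = t then (1:ℝ) else 0) with hP
    set Q : Matrix (Fin N) (Fin n) ℝ :=
      Matrix.of (fun t j => f (rep t) (rep (g (β j)))) with hQ
    have hfact : B = P * Q := by
      ext i j
      rw [Matrix.mul_apply]
      calc B i j = ∑ t, if g (β i) = t then Q t j else 0 := by
            rw [Finset.sum_ite_eq]
            simp [hB, hQ]
        _ = ∑ t, P i t * Q t j := by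
            refine Finset.sum_congr rfl fun t _ => ?_
            by_cases h : g (β i) = t <;> simp [hP, h]
    rw [hfact]
    exact (Matrix.rank_mul_le_left P Q).trans
      (P.rank_le_card_width.trans (Fintype.card_fin N).le)
  -- assemble
  have key : nuclearNorm M ≤ nuclearNorm (M - B) + nuclearNorm B := by
    have : M = (M - B) + B := by abel
    calc nuclearNorm M = nuclearNorm ((M - B) + B) := by rw [← this]
      _ ≤ _ := nuclearNorm_add_le _ _
  have h1 : nuclearNorm (M - B) ≤ Real.sqrt n * (n * δ) := by
    calc nuclearNorm (M - B)
        ≤ Real.sqrt n * Real.sqrt (∑ i, ∑ j, ((M - B) i j)^2) :=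
          nuclearNorm_le_sqrt_rank (M - B) (M - B).rank_le_width
      _ ≤ Real.sqrt n * (n * δ) := by
          have := frob_sq_le (M - B) δ hδ.le hMB
          exact mul_le_mul_of_nonneg_left this (Real.sqrt_nonneg _)
  have h2 : nuclearNorm B ≤ Real.sqrt N * n := by
    calc nuclearNorm B
        ≤ Real.sqrt N * Real.sqrt (∑ i, ∑ j, (B i j)^2) :=
          nuclearNorm_le_sqrt_rank B hrank
      _ ≤ Real.sqrt N * ((n:ℝ) * 1) := by
          have := frob_sq_le B 1 zero_le_one hB1
          exact mul_le_mul_of_nonneg_left this (Real.sqrt_nonneg _)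
      _ = Real.sqrt N * n := by ring
  have hpow : (n : ℝ) ^ ((3:ℝ)/2) * δ = Real.sqrt n * (n * δ) := by
    rw [rpow_three_halves]; ring
  rw [hpow]
  linarith
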